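/- (Fine / CHSH) Let p_1, p_2, p_3, p_4, p_{13}, p_{14}, p_{23}, p_{24} ∈ [0,1]. The vector (p_1,p_2,p_3,p_4,p_{13},p_{14},p_{23},p_{24}) lies in the convex hull of the 16 vectors (ε_1, ε_2, ε_3, ε_4, ε_1ε_3, ε_1ε_4, ε_2ε_3, ε_2ε_4), ε ∈ {0,1}^4, if and only if: 0 ≤ p_{ij} ≤ p_i, p_{ij} ≤ p_j, p_i + p_j − p_{ij} ≤ 1 for ij ∈ {13,14,23,24}, and the eight CHSH inequalities −1 ≤ p_{is} + p_{is'} + p_{js'} − p_{js} − p_i − p_{s'} ≤ 0 for all choices {i,j} = {1,2}, {s,s'} = {3,4}. -/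

import Mathlib

/-- `{0,1}`-valued assignment as a real number. -/
noncomputable def bv (b : Bool) : ℝ := if b then 1 else 0

/-- Vertex of the CHSH correlation polytope:
`(ε₁, ε₂, ε₃, ε₄, ε₁ε₃, ε₁ε₄, ε₂ε₃, ε₂ε₄)`. -/
noncomputable def chshVertex (ε : Fin 4 → Bool) : Fin 8 → ℝ :=
  ![bv (ε 0), bv (ε 1), bv (ε 2), bv (ε 3),
    bv (ε 0) * bv (ε 2), bv (ε 0) * bv (ε 3),
    bv (ε 1) * bv (ε 2), bv (ε 1) * bv (ε 3)]

/-- Equivalence between quadruples of booleans and functions `Fin 4 → Bool`. -/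
def bEquiv : (Bool × Bool × Bool × Bool) ≃ (Fin 4 → Bool) where
  toFun x := ![x.1, x.2.1, x.2.2.1, x.2.2.2]
  invFun ε := (ε 0, ε 1, ε 2, ε 3)
  left_inv := by rintro ⟨a,b,c,d⟩; rfl
  right_inv := by
    intro ε; funext i
    fin_cases i <;> rfl

lemma sum_expand {M : Type*} [AddCommMonoid M] (f : (Fin 4 → Bool) → M) :
    ∑ ε : Fin 4 → Bool, f ε =
      ∑ a : Bool, ∑ b : Bool, ∑ c : Bool, ∑ d : Bool, f ![a,b,c,d] := by
  rw [← Fintype.sum_equiv bEquiv (fun x => f ![x.1, x.2.1, x.2.2.1, x.2.2.2]) f (fun x => rfl)]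
  simp [Fintype.sum_prod_type]

/-- The convex hull is inside any halfspace containing all vertices. -/
lemma hull_halfspace (c : Fin 8 → ℝ) (r : ℝ)
    (hv : ∀ ε : Fin 4 → Bool, ∑ i, c i * chshVertex ε i ≤ r) :
    ∀ x ∈ convexHull ℝ (Set.range chshVertex), ∑ i, c i * x i ≤ r := by
  intro x hx
  have hlin : IsLinearMap ℝ (fun y : Fin 8 → ℝ => ∑ i, c i * y i) := by
    constructor <;> intros <;>
      simp [Finset.mul_sum, mul_add, Finset.sum_add_distrib, mul_left_comm]
  exact convexHull_min (by rintro y ⟨ε, rfl⟩; exact hv ε) (convex_halfSpace_le hlin r) hx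

/-- The Fine weights: an explicit joint distribution on `{0,1}⁴`. -/
noncomputable def fineW (p1 p2 p3 p4 p13 p14 p23 p24 p34 t1 t2 : ℝ) :
    (Fin 4 → Bool) → ℝ := fun ε =>
  match ε 0, ε 1, ε 2, ε 3 with
  | true,  true,  true,  true  => min t1 t2
  | true,  false, true,  true  => t1 - min t1 t2
  | false, true,  true,  true  => t2 - min t1 t2
  | false, false, true,  true  => p34 - t1 - t2 + min t1 t2
  | true,  true,  true,  false => min (p13 - t1) (p23 - t2)
  | true,  false, true,  false => (p13 - t1) - min (p13 - t1) (p23 - t2)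
  | false, true,  true,  false => (p23 - t2) - min (p13 - t1) (p23 - t2)
  | false, false, true,  false =>
      (p3 - p34) - (p13 - t1) - (p23 - t2) + min (p13 - t1) (p23 - t2)
  | true,  true,  false, true  => min (p14 - t1) (p24 - t2)
  | true,  false, false, true  => (p14 - t1) - min (p14 - t1) (p24 - t2)
  | false, true,  false, true  => (p24 - t2) - min (p14 - t1) (p24 - t2)
  | false, false, false, true  =>
      (p4 - p34) - (p14 - t1) - (p24 - t2) + min (p14 - t1) (p24 - t2)
  | true,  true,  false, false => min (p1 - p13 - p14 + t1) (p2 - p23 - p24 + t2)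
  | true,  false, false, false =>
      (p1 - p13 - p14 + t1) - min (p1 - p13 - p14 + t1) (p2 - p23 - p24 + t2)
  | false, true,  false, false =>
      (p2 - p23 - p24 + t2) - min (p1 - p13 - p14 + t1) (p2 - p23 - p24 + t2)
  | false, false, false, false =>
      (1 - p3 - p4 + p34) - (p1 - p13 - p14 + t1) - (p2 - p23 - p24 + t2)
        + min (p1 - p13 - p14 + t1) (p2 - p23 - p24 + t2)

set_option maxHeartbeats 2000000 in
/-- Fine / CHSH: `(p₁,p₂,p₃,p₄,p₁₃,p₁₄,p₂₃,p₂₄)` with all single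
probabilities in `[0,1]` lies in the CHSH polytope iff it satisfies the trivial
pair inequalities and the eight CHSH inequalities. -/
theorem mem_chsh_polytope_iff
    (p1 p2 p3 p4 p13 p14 p23 p24 : ℝ)
    (h1 : 0 ≤ p1 ∧ p1 ≤ 1) (h2 : 0 ≤ p2 ∧ p2 ≤ 1)
    (h3 : 0 ≤ p3 ∧ p3 ≤ 1) (h4 : 0 ≤ p4 ∧ p4 ≤ 1) :
    (![p1, p2, p3, p4, p13, p14, p23, p24]
        ∈ convexHull ℝ (Set.range chshVertex)) ↔
      ((0 ≤ p13 ∧ p13 ≤ p1 ∧ p13 ≤ p3 ∧ p1 + p3 - p13 ≤ 1) ∧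
       (0 ≤ p14 ∧ p14 ≤ p1 ∧ p14 ≤ p4 ∧ p1 + p4 - p14 ≤ 1) ∧
       (0 ≤ p23 ∧ p23 ≤ p2 ∧ p23 ≤ p3 ∧ p2 + p3 - p23 ≤ 1) ∧
       (0 ≤ p24 ∧ p24 ≤ p2 ∧ p24 ≤ p4 ∧ p2 + p4 - p24 ≤ 1) ∧
       (-1 ≤ p13 + p14 + p24 - p23 - p1 - p4 ∧ p13 + p14 + p24 - p23 - p1 - p4 ≤ 0) ∧
       (-1 ≤ p23 + p24 + p14 - p13 - p2 - p4 ∧ p23 + p24 + p14 - p13 - p2 - p4 ≤ 0) ∧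
       (-1 ≤ p14 + p13 + p23 - p24 - p1 - p3 ∧ p14 + p13 + p23 - p24 - p1 - p3 ≤ 0) ∧
       (-1 ≤ p24 + p23 + p13 - p14 - p2 - p3 ∧ p24 + p23 + p13 - p14 - p2 - p3 ≤ 0)) := by
  obtain ⟨h1a, h1b⟩ := h1
  obtain ⟨h2a, h2b⟩ := h2
  obtain ⟨h3a, h3b⟩ := h3
  obtain ⟨h4a, h4b⟩ := h4
  constructor
  · intro hmem
    have key0 := hull_halfspace ![0,0,0,0,(-1),0,0,0] 0 (by
      intro ε
      cases h0 : ε 0 <;> cases h1 : ε 1 <;> cases h2 : ε 2 <;> cases h3 : ε 3 <;>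
        norm_num [chshVertex, bv, h0, h1, h2, h3, Fin.sum_univ_succ,
          Matrix.cons_val_zero, Matrix.cons_val_succ]) _ hmem
    norm_num [Fin.sum_univ_succ, Matrix.cons_val_zero, Matrix.cons_val_succ] at key0
    have key1 := hull_halfspace ![(-1),0,0,0,1,0,0,0] 0 (by
      intro ε
      cases h0 : ε 0 <;> cases h1 : ε 1 <;> cases h2 : ε 2 <;> cases h3 : ε 3 <;>
        norm_num [chshVertex, bv, h0, h1, h2, h3, Fin.sum_univ_succ,
          Matrix.cons_val_zero, Matrix.cons_val_succ]) _ hmem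
    norm_num [Fin.sum_univ_succ, Matrix.cons_val_zero, Matrix.cons_val_succ] at key1
    have key2 := hull_halfspace ![0,0,(-1),0,1,0,0,0] 0 (by
      intro ε
      cases h0 : ε 0 <;> cases h1 : ε 1 <;> cases h2 : ε 2 <;> cases h3 : ε 3 <;>
        norm_num [chshVertex, bv, h0, h1, h2, h3, Fin.sum_univ_succ,
          Matrix.cons_val_zero, Matrix.cons_val_succ]) _ hmem
    norm_num [Fin.sum_univ_succ, Matrix.cons_val_zero, Matrix.cons_val_succ] at key2
    have key3 := hull_halfspace ![1,0,1,0,(-1),0,0,0] 1 (by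
      intro ε
      cases h0 : ε 0 <;> cases h1 : ε 1 <;> cases h2 : ε 2 <;> cases h3 : ε 3 <;>
        norm_num [chshVertex, bv, h0, h1, h2, h3, Fin.sum_univ_succ,
          Matrix.cons_val_zero, Matrix.cons_val_succ]) _ hmem
    norm_num [Fin.sum_univ_succ, Matrix.cons_val_zero, Matrix.cons_val_succ] at key3
    have key4 := hull_halfspace ![0,0,0,0,0,(-1),0,0] 0 (by
      intro ε
      cases h0 : ε 0 <;> cases h1 : ε 1 <;> cases h2 : ε 2 <;> cases h3 : ε 3 <;>
        norm_num [chshVertex, bv, h0, h1, h2, h3, Fin.sum_univ_succ,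
          Matrix.cons_val_zero, Matrix.cons_val_succ]) _ hmem
    norm_num [Fin.sum_univ_succ, Matrix.cons_val_zero, Matrix.cons_val_succ] at key4
    have key5 := hull_halfspace ![(-1),0,0,0,0,1,0,0] 0 (by
      intro ε
      cases h0 : ε 0 <;> cases h1 : ε 1 <;> cases h2 : ε 2 <;> cases h3 : ε 3 <;>
        norm_num [chshVertex, bv, h0, h1, h2, h3, Fin.sum_univ_succ,
          Matrix.cons_val_zero, Matrix.cons_val_succ]) _ hmem
    norm_num [Fin.sum_univ_succ, Matrix.cons_val_zero, Matrix.cons_val_succ] at key5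
    have key6 := hull_halfspace ![0,0,0,(-1),0,1,0,0] 0 (by
      intro ε
      cases h0 : ε 0 <;> cases h1 : ε 1 <;> cases h2 : ε 2 <;> cases h3 : ε 3 <;>
        norm_num [chshVertex, bv, h0, h1, h2, h3, Fin.sum_univ_succ,
          Matrix.cons_val_zero, Matrix.cons_val_succ]) _ hmem
    norm_num [Fin.sum_univ_succ, Matrix.cons_val_zero, Matrix.cons_val_succ] at key6
    have key7 := hull_halfspace ![1,0,0,1,0,(-1),0,0] 1 (by
      intro ε
      cases h0 : ε 0 <;> cases h1 : ε 1 <;> cases h2 : ε 2 <;> cases h3 : ε 3 <;>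
        norm_num [chshVertex, bv, h0, h1, h2, h3, Fin.sum_univ_succ,
          Matrix.cons_val_zero, Matrix.cons_val_succ]) _ hmem
    norm_num [Fin.sum_univ_succ, Matrix.cons_val_zero, Matrix.cons_val_succ] at key7
    have key8 := hull_halfspace ![0,0,0,0,0,0,(-1),0] 0 (by
      intro ε
      cases h0 : ε 0 <;> cases h1 : ε 1 <;> cases h2 : ε 2 <;> cases h3 : ε 3 <;>
        norm_num [chshVertex, bv, h0, h1, h2, h3, Fin.sum_univ_succ,
          Matrix.cons_val_zero, Matrix.cons_val_succ]) _ hmem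
    norm_num [Fin.sum_univ_succ, Matrix.cons_val_zero, Matrix.cons_val_succ] at key8
    have key9 := hull_halfspace ![0,(-1),0,0,0,0,1,0] 0 (by
      intro ε
      cases h0 : ε 0 <;> cases h1 : ε 1 <;> cases h2 : ε 2 <;> cases h3 : ε 3 <;>
        norm_num [chshVertex, bv, h0, h1, h2, h3, Fin.sum_univ_succ,
          Matrix.cons_val_zero, Matrix.cons_val_succ]) _ hmem
    norm_num [Fin.sum_univ_succ, Matrix.cons_val_zero, Matrix.cons_val_succ] at key9
    have key10 := hull_halfspace ![0,0,(-1),0,0,0,1,0] 0 (by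
      intro ε
      cases h0 : ε 0 <;> cases h1 : ε 1 <;> cases h2 : ε 2 <;> cases h3 : ε 3 <;>
        norm_num [chshVertex, bv, h0, h1, h2, h3, Fin.sum_univ_succ,
          Matrix.cons_val_zero, Matrix.cons_val_succ]) _ hmem
    norm_num [Fin.sum_univ_succ, Matrix.cons_val_zero, Matrix.cons_val_succ] at key10
    have key11 := hull_halfspace ![0,1,1,0,0,0,(-1),0] 1 (by
      intro ε
      cases h0 : ε 0 <;> cases h1 : ε 1 <;> cases h2 : ε 2 <;> cases h3 : ε 3 <;>
        norm_num [chshVertex, bv, h0, h1, h2, h3, Fin.sum_univ_succ,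
          Matrix.cons_val_zero, Matrix.cons_val_succ]) _ hmem
    norm_num [Fin.sum_univ_succ, Matrix.cons_val_zero, Matrix.cons_val_succ] at key11
    have key12 := hull_halfspace ![0,0,0,0,0,0,0,(-1)] 0 (by
      intro ε
      cases h0 : ε 0 <;> cases h1 : ε 1 <;> cases h2 : ε 2 <;> cases h3 : ε 3 <;>
        norm_num [chshVertex, bv, h0, h1, h2, h3, Fin.sum_univ_succ,
          Matrix.cons_val_zero, Matrix.cons_val_succ]) _ hmem
    norm_num [Fin.sum_univ_succ, Matrix.cons_val_zero, Matrix.cons_val_succ] at key12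
    have key13 := hull_halfspace ![0,(-1),0,0,0,0,0,1] 0 (by
      intro ε
      cases h0 : ε 0 <;> cases h1 : ε 1 <;> cases h2 : ε 2 <;> cases h3 : ε 3 <;>
        norm_num [chshVertex, bv, h0, h1, h2, h3, Fin.sum_univ_succ,
          Matrix.cons_val_zero, Matrix.cons_val_succ]) _ hmem
    norm_num [Fin.sum_univ_succ, Matrix.cons_val_zero, Matrix.cons_val_succ] at key13
    have key14 := hull_halfspace ![0,0,0,(-1),0,0,0,1] 0 (by
      intro ε
      cases h0 : ε 0 <;> cases h1 : ε 1 <;> cases h2 : ε 2 <;> cases h3 : ε 3 <;>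
        norm_num [chshVertex, bv, h0, h1, h2, h3, Fin.sum_univ_succ,
          Matrix.cons_val_zero, Matrix.cons_val_succ]) _ hmem
    norm_num [Fin.sum_univ_succ, Matrix.cons_val_zero, Matrix.cons_val_succ] at key14
    have key15 := hull_halfspace ![0,1,0,1,0,0,0,(-1)] 1 (by
      intro ε
      cases h0 : ε 0 <;> cases h1 : ε 1 <;> cases h2 : ε 2 <;> cases h3 : ε 3 <;>
        norm_num [chshVertex, bv, h0, h1, h2, h3, Fin.sum_univ_succ,
          Matrix.cons_val_zero, Matrix.cons_val_succ]) _ hmem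
    norm_num [Fin.sum_univ_succ, Matrix.cons_val_zero, Matrix.cons_val_succ] at key15
    have key16 := hull_halfspace ![(-1),0,0,(-1),1,1,(-1),1] 0 (by
      intro ε
      cases h0 : ε 0 <;> cases h1 : ε 1 <;> cases h2 : ε 2 <;> cases h3 : ε 3 <;>
        norm_num [chshVertex, bv, h0, h1, h2, h3, Fin.sum_univ_succ,
          Matrix.cons_val_zero, Matrix.cons_val_succ]) _ hmem
    norm_num [Fin.sum_univ_succ, Matrix.cons_val_zero, Matrix.cons_val_succ] at key16
    have key17 := hull_halfspace ![1,0,0,1,(-1),(-1),1,(-1)] 1 (by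
      intro ε
      cases h0 : ε 0 <;> cases h1 : ε 1 <;> cases h2 : ε 2 <;> cases h3 : ε 3 <;>
        norm_num [chshVertex, bv, h0, h1, h2, h3, Fin.sum_univ_succ,
          Matrix.cons_val_zero, Matrix.cons_val_succ]) _ hmem
    norm_num [Fin.sum_univ_succ, Matrix.cons_val_zero, Matrix.cons_val_succ] at key17
    have key18 := hull_halfspace ![0,(-1),0,(-1),(-1),1,1,1] 0 (by
      intro ε
      cases h0 : ε 0 <;> cases h1 : ε 1 <;> cases h2 : ε 2 <;> cases h3 : ε 3 <;>
        norm_num [chshVertex, bv, h0, h1, h2, h3, Fin.sum_univ_succ,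
          Matrix.cons_val_zero, Matrix.cons_val_succ]) _ hmem
    norm_num [Fin.sum_univ_succ, Matrix.cons_val_zero, Matrix.cons_val_succ] at key18
    have key19 := hull_halfspace ![0,1,0,1,1,(-1),(-1),(-1)] 1 (by
      intro ε
      cases h0 : ε 0 <;> cases h1 : ε 1 <;> cases h2 : ε 2 <;> cases h3 : ε 3 <;>
        norm_num [chshVertex, bv, h0, h1, h2, h3, Fin.sum_univ_succ,
          Matrix.cons_val_zero, Matrix.cons_val_succ]) _ hmem
    norm_num [Fin.sum_univ_succ, Matrix.cons_val_zero, Matrix.cons_val_succ] at key19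
    have key20 := hull_halfspace ![(-1),0,(-1),0,1,1,1,(-1)] 0 (by
      intro ε
      cases h0 : ε 0 <;> cases h1 : ε 1 <;> cases h2 : ε 2 <;> cases h3 : ε 3 <;>
        norm_num [chshVertex, bv, h0, h1, h2, h3, Fin.sum_univ_succ,
          Matrix.cons_val_zero, Matrix.cons_val_succ]) _ hmem
    norm_num [Fin.sum_univ_succ, Matrix.cons_val_zero, Matrix.cons_val_succ] at key20
    have key21 := hull_halfspace ![1,0,1,0,(-1),(-1),(-1),1] 1 (by
      intro ε
      cases h0 : ε 0 <;> cases h1 : ε 1 <;> cases h2 : ε 2 <;> cases h3 : ε 3 <;>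
        norm_num [chshVertex, bv, h0, h1, h2, h3, Fin.sum_univ_succ,
          Matrix.cons_val_zero, Matrix.cons_val_succ]) _ hmem
    norm_num [Fin.sum_univ_succ, Matrix.cons_val_zero, Matrix.cons_val_succ] at key21
    have key22 := hull_halfspace ![0,(-1),(-1),0,1,(-1),1,1] 0 (by
      intro ε
      cases h0 : ε 0 <;> cases h1 : ε 1 <;> cases h2 : ε 2 <;> cases h3 : ε 3 <;>
        norm_num [chshVertex, bv, h0, h1, h2, h3, Fin.sum_univ_succ,
          Matrix.cons_val_zero, Matrix.cons_val_succ]) _ hmem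
    norm_num [Fin.sum_univ_succ, Matrix.cons_val_zero, Matrix.cons_val_succ] at key22
    have key23 := hull_halfspace ![0,1,1,0,(-1),1,(-1),(-1)] 1 (by
      intro ε
      cases h0 : ε 0 <;> cases h1 : ε 1 <;> cases h2 : ε 2 <;> cases h3 : ε 3 <;>
        norm_num [chshVertex, bv, h0, h1, h2, h3, Fin.sum_univ_succ,
          Matrix.cons_val_zero, Matrix.cons_val_succ]) _ hmem
    norm_num [Fin.sum_univ_succ, Matrix.cons_val_zero, Matrix.cons_val_succ] at key23
    refine ⟨⟨?_,?_,?_,?_⟩,⟨?_,?_,?_,?_⟩,⟨?_,?_,?_,?_⟩,⟨?_,?_,?_,?_⟩,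
      ⟨?_,?_⟩,⟨?_,?_⟩,⟨?_,?_⟩,⟨?_,?_⟩⟩ <;> linarith
  · rintro ⟨⟨h13a,h13b,h13c,h13d⟩,⟨h14a,h14b,h14c,h14d⟩,⟨h23a,h23b,h23c,h23d⟩,
      ⟨h24a,h24b,h24c,h24d⟩,⟨c1a,c1b⟩,⟨c2a,c2b⟩,⟨c3a,c3b⟩,⟨c4a,c4b⟩⟩
    set p34 := max (max (max 0 (p3+p4-1)) (max (p13+p14-p1) (p1+p3+p4-1-p13-p14)))
      (max (p23+p24-p2) (p2+p3+p4-1-p23-p24)) with hp34def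
    have hp34l1 : (0:ℝ) ≤ p34 := by
      rw [hp34def]; exact le_max_of_le_left (le_max_of_le_left (le_max_left _ _))
    have hp34l2 : p3+p4-1 ≤ p34 := by
      rw [hp34def]; exact le_max_of_le_left (le_max_of_le_left (le_max_right _ _))
    have hp34l3 : p13+p14-p1 ≤ p34 := by
      rw [hp34def]; exact le_max_of_le_left (le_max_of_le_right (le_max_left _ _))
    have hp34l4 : p1+p3+p4-1-p13-p14 ≤ p34 := by
      rw [hp34def]; exact le_max_of_le_left (le_max_of_le_right (le_max_right _ _))
    have hp34l5 : p23+p24-p2 ≤ p34 := by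
      rw [hp34def]; exact le_max_of_le_right (le_max_left _ _)
    have hp34l6 : p2+p3+p4-1-p23-p24 ≤ p34 := by
      rw [hp34def]; exact le_max_of_le_right (le_max_right _ _)
    have hp34u1 : p34 ≤ p3 := by
      rw [hp34def]
      exact max_le (max_le (max_le (by linarith) (by linarith))
        (max_le (by linarith) (by linarith))) (max_le (by linarith) (by linarith))
    have hp34u2 : p34 ≤ p4 := by
      rw [hp34def]
      exact max_le (max_le (max_le (by linarith) (by linarith))
        (max_le (by linarith) (by linarith))) (max_le (by linarith) (by linarith))
    have hp34u3 : p34 ≤ p3+p14-p13 := by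
      rw [hp34def]
      exact max_le (max_le (max_le (by linarith) (by linarith))
        (max_le (by linarith) (by linarith))) (max_le (by linarith) (by linarith))
    have hp34u4 : p34 ≤ p4+p13-p14 := by
      rw [hp34def]
      exact max_le (max_le (max_le (by linarith) (by linarith))
        (max_le (by linarith) (by linarith))) (max_le (by linarith) (by linarith))
    have hp34u5 : p34 ≤ p3+p24-p23 := by
      rw [hp34def]
      exact max_le (max_le (max_le (by linarith) (by linarith))
        (max_le (by linarith) (by linarith))) (max_le (by linarith) (by linarith))
    have hp34u6 : p34 ≤ p4+p23-p24 := by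
      rw [hp34def]
      exact max_le (max_le (max_le (by linarith) (by linarith))
        (max_le (by linarith) (by linarith))) (max_le (by linarith) (by linarith))
    clear hp34def
    set t1 := max (max 0 (p13+p14-p1)) (max (p13+p34-p3) (p14+p34-p4)) with ht1def
    have ht1a : (0:ℝ) ≤ t1 := by rw [ht1def]; exact le_max_of_le_left (le_max_left _ _)
    have ht1b : p13+p14-p1 ≤ t1 := by rw [ht1def]; exact le_max_of_le_left (le_max_right _ _)
    have ht1c : p13+p34-p3 ≤ t1 := by rw [ht1def]; exact le_max_of_le_right (le_max_left _ _)
    have ht1d : p14+p34-p4 ≤ t1 := by rw [ht1def]; exact le_max_of_le_right (le_max_right _ _)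
    have ht1e : t1 ≤ p13 := by
      rw [ht1def]
      exact max_le (max_le (by linarith) (by linarith)) (max_le (by linarith) (by linarith))
    have ht1f : t1 ≤ p14 := by
      rw [ht1def]
      exact max_le (max_le (by linarith) (by linarith)) (max_le (by linarith) (by linarith))
    have ht1g : t1 ≤ p34 := by
      rw [ht1def]
      exact max_le (max_le (by linarith) (by linarith)) (max_le (by linarith) (by linarith))
    have ht1h : t1 ≤ 1-p1-p3-p4+p13+p14+p34 := by
      rw [ht1def]
      exact max_le (max_le (by linarith) (by linarith)) (max_le (by linarith) (by linarith))
    clear ht1def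
    set t2 := max (max 0 (p23+p24-p2)) (max (p23+p34-p3) (p24+p34-p4)) with ht2def
    have ht2a : (0:ℝ) ≤ t2 := by rw [ht2def]; exact le_max_of_le_left (le_max_left _ _)
    have ht2b : p23+p24-p2 ≤ t2 := by rw [ht2def]; exact le_max_of_le_left (le_max_right _ _)
    have ht2c : p23+p34-p3 ≤ t2 := by rw [ht2def]; exact le_max_of_le_right (le_max_left _ _)
    have ht2d : p24+p34-p4 ≤ t2 := by rw [ht2def]; exact le_max_of_le_right (le_max_right _ _)
    have ht2e : t2 ≤ p23 := by
      rw [ht2def]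
      exact max_le (max_le (by linarith) (by linarith)) (max_le (by linarith) (by linarith))
    have ht2f : t2 ≤ p24 := by
      rw [ht2def]
      exact max_le (max_le (by linarith) (by linarith)) (max_le (by linarith) (by linarith))
    have ht2g : t2 ≤ p34 := by
      rw [ht2def]
      exact max_le (max_le (by linarith) (by linarith)) (max_le (by linarith) (by linarith))
    have ht2h : t2 ≤ 1-p2-p3-p4+p23+p24+p34 := by
      rw [ht2def]
      exact max_le (max_le (by linarith) (by linarith)) (max_le (by linarith) (by linarith))
    clear ht2def
    -- facts about the four minima
    have hm11a := min_le_left t1 t2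
    have hm11b := min_le_right t1 t2
    have hm11c : (0:ℝ) ≤ min t1 t2 := le_min ht1a ht2a
    have hm11d : t1 + t2 - min t1 t2 ≤ p34 := by
      have h := min_add_max t1 t2
      have h' : max t1 t2 ≤ p34 := max_le ht1g ht2g
      linarith
    have hm10a := min_le_left (p13 - t1) (p23 - t2)
    have hm10b := min_le_right (p13 - t1) (p23 - t2)
    have hm10c : (0:ℝ) ≤ min (p13 - t1) (p23 - t2) :=
      le_min (by linarith) (by linarith)
    have hm10d : (p13 - t1) + (p23 - t2) - min (p13 - t1) (p23 - t2) ≤ p3 - p34 := by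
      have h := min_add_max (p13 - t1) (p23 - t2)
      have h' : max (p13 - t1) (p23 - t2) ≤ p3 - p34 :=
        max_le (by linarith) (by linarith)
      linarith
    have hm01a := min_le_left (p14 - t1) (p24 - t2)
    have hm01b := min_le_right (p14 - t1) (p24 - t2)
    have hm01c : (0:ℝ) ≤ min (p14 - t1) (p24 - t2) :=
      le_min (by linarith) (by linarith)
    have hm01d : (p14 - t1) + (p24 - t2) - min (p14 - t1) (p24 - t2) ≤ p4 - p34 := by
      have h := min_add_max (p14 - t1) (p24 - t2)
      have h' : max (p14 - t1) (p24 - t2) ≤ p4 - p34 :=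
        max_le (by linarith) (by linarith)
      linarith
    have hm00a := min_le_left (p1 - p13 - p14 + t1) (p2 - p23 - p24 + t2)
    have hm00b := min_le_right (p1 - p13 - p14 + t1) (p2 - p23 - p24 + t2)
    have hm00c : (0:ℝ) ≤ min (p1 - p13 - p14 + t1) (p2 - p23 - p24 + t2) :=
      le_min (by linarith) (by linarith)
    have hm00d : (p1 - p13 - p14 + t1) + (p2 - p23 - p24 + t2)
        - min (p1 - p13 - p14 + t1) (p2 - p23 - p24 + t2) ≤ 1 - p3 - p4 + p34 := by
      have h := min_add_max (p1 - p13 - p14 + t1) (p2 - p23 - p24 + t2)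
      have h' : max (p1 - p13 - p14 + t1) (p2 - p23 - p24 + t2) ≤ 1 - p3 - p4 + p34 :=
        max_le (by linarith) (by linarith)
      linarith
    have hw0 : ∀ ε : Fin 4 → Bool,
        0 ≤ fineW p1 p2 p3 p4 p13 p14 p23 p24 p34 t1 t2 ε := by
      intro ε
      cases h0 : ε 0 <;> cases hb1 : ε 1 <;> cases hb2 : ε 2 <;> cases hb3 : ε 3 <;>
        simp only [fineW, h0, hb1, hb2, hb3] <;> linarith
    have hsum : ∑ ε : Fin 4 → Bool,
        fineW p1 p2 p3 p4 p13 p14 p23 p24 p34 t1 t2 ε = 1 := by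
      rw [sum_expand]
      simp only [Fintype.sum_bool]
      simp only [fineW, Matrix.cons_val_zero, Matrix.cons_val_one, Matrix.head_cons,
        Matrix.cons_val_two, Matrix.cons_val_three, Matrix.tail_cons]
      ring
    have hx : ![p1, p2, p3, p4, p13, p14, p23, p24] =
        ∑ ε : Fin 4 → Bool,
          fineW p1 p2 p3 p4 p13 p14 p23 p24 p34 t1 t2 ε • chshVertex ε := by
      rw [sum_expand]
      simp only [Fintype.sum_bool]
      simp only [fineW, chshVertex, bv, Matrix.cons_val_zero, Matrix.cons_val_one,
        Matrix.head_cons, Matrix.cons_val_two, Matrix.cons_val_three, Matrix.tail_cons,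
        if_true, if_false, Bool.false_eq_true, ite_true, ite_false,
        Matrix.smul_cons, Matrix.smul_empty, Matrix.cons_add_cons, Matrix.empty_add_empty,
        smul_eq_mul]
      simp only [Matrix.vecCons, Fin.cons_inj, eq_iff_true_of_subsingleton, and_true]
      refine ⟨?_,?_,?_,?_,?_,?_,?_,?_⟩ <;> ring
    rw [hx, ← Finset.centerMass_eq_of_sum_1 _ _ hsum]
    exact Finset.centerMass_mem_convexHull _ (fun i _ => hw0 i)
      (by rw [hsum]; norm_num) (fun i _ => Set.mem_range_self i)
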